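/- Let G = (V, E) be a finite directed graph and let e ∈ E. Suppose S ⊆ V is a minimal (with respect to set inclusion) subset such that G|_S contains a directed cycle and (G − e)|_S is acyclic. Then G|_S is a unicycle and e is an edge of G|_S. -/

import Mathlib

variable {V : Type*}

/-- A directed cycle given as a nonempty list of distinct vertices
`v₁, …, v_k` with edges `v₁→v₂, …, v_{k-1}→v_k, v_k→v₁`. -/
def IsCycle (E : V → V → Prop) : List V → Prop
  | [] => False
  | v :: l => (v :: l).Nodup ∧ List.Chain E v (l ++ [v])

/-- A directed graph is acyclic if it contains no directed cycle. -/
def Acyclic (E : V → V → Prop) : Prop := ∀ l : List V, ¬ IsCycle E l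

/-- The subgraph of `E` induced by the vertex set `S`. -/
def Induced (E : V → V → Prop) (S : Set V) : V → V → Prop :=
  fun a b => a ∈ S ∧ b ∈ S ∧ E a b

/-- The graph obtained from `E` by deleting the edge `e`. -/
def Delete (E : V → V → Prop) (e : V × V) : V → V → Prop :=
  fun a b => E a b ∧ (a, b) ≠ e

/-- `(a, b)` is an edge of the directed cycle determined by the list `l`
(consecutive elements, wrapping around). -/
def CycleEdge (l : List V) (a b : V) : Prop :=
  ∃ i : Fin l.length, l.get i = a ∧ l.get ⟨(↑i + 1) % l.length, Nat.mod_lt _ i.pos⟩ = b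

/-- `G|_S` is a unicycle: the edge set of the induced subgraph on `S` is exactly
the edge set of a Hamiltonian directed cycle of `G|_S`. -/
def IsUnicycle (E : V → V → Prop) (S : Set V) : Prop :=
  ∃ l : List V, l ≠ [] ∧ l.Nodup ∧ (∀ v, v ∈ l ↔ v ∈ S) ∧
    ∀ a b, Induced E S a b ↔ CycleEdge l a b

lemma get_congr (l : List V) {i j : ℕ} (h : i = j) (hi : i < l.length) (hj : j < l.length) :
    l.get ⟨i, hi⟩ = l.get ⟨j, hj⟩ := by subst h; rfl

lemma get_append_singleton (v : V) (t : List V) (i : ℕ) (h : i < t.length + 1) :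
    (t ++ [v]).get ⟨i, by simpa using h⟩ =
      (v :: t).get ⟨(i + 1) % (t.length + 1), Nat.mod_lt _ (Nat.succ_pos _)⟩ := by
  rcases Nat.lt_or_ge i t.length with h' | h'
  · have h2 : (i + 1) % (t.length + 1) = i + 1 := Nat.mod_eq_of_lt (by omega)
    simp [List.get_eq_getElem, h2, List.getElem_append_left, h']
  · have : i = t.length := by omega
    subst this
    simp [List.get_eq_getElem]

theorem chain_iff_get' {α} {R : α → α → Prop} {a : α} {l : List α} : List.Chain R a l ↔
    (∀ h : 0 < l.length, R a (l.get ⟨0, h⟩)) ∧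
      ∀ (i : ℕ) (h : i < l.length - 1),
        R (l.get ⟨i, by omega⟩) (l.get ⟨i+1, by omega⟩) := by
  unfold List.Chain
  cases l with
  | nil => simp
  | cons b t =>
    rw [List.isChain_cons_cons, List.isChain_iff_getElem]
    simp

lemma isCycle_iff_forall (E : V → V → Prop) (l : List V) :
    IsCycle E l ↔ l ≠ [] ∧ l.Nodup ∧
      ∀ i : Fin l.length, E (l.get i) (l.get ⟨(↑i + 1) % l.length, Nat.mod_lt _ i.pos⟩) := by
  cases l with
  | nil => simp [IsCycle]
  | cons v t =>
    simp only [IsCycle, ne_eq, reduceCtorEq, not_false_iff, true_and]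
    constructor
    · rintro ⟨hnd, hch⟩
      refine ⟨hnd, fun i => ?_⟩
      rw [chain_iff_get'] at hch
      obtain ⟨h0, hs⟩ := hch
      rcases i with ⟨i, hi⟩
      cases i with
      | zero =>
        have := h0 (by simp)
        rw [get_append_singleton v t 0 (by omega)] at this
        simpa using this
      | succ j =>
        have hjt : j < t.length := by simpa using hi
        have := hs j (by simpa using hjt)
        rw [get_append_singleton v t j (by omega),
            get_append_singleton v t (j+1) (by omega)] at this
        have hm : (j + 1) % (t.length + 1) = j + 1 := Nat.mod_eq_of_lt (by omega)
        simp only [List.length_cons] at *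
        rw [get_congr (v::t) hm] at this
        exact this
    · rintro ⟨hnd, hF⟩
      refine ⟨hnd, ?_⟩
      rw [chain_iff_get']
      constructor
      · intro h
        have := hF ⟨0, by simp⟩
        rw [get_append_singleton v t 0 (by omega)]
        simpa using this
      · intro j hj
        simp only [List.length_append, List.length_singleton] at hj
        have := hF ⟨j + 1, by simp; omega⟩
        rw [get_append_singleton v t j (by omega), get_append_singleton v t (j+1) (by omega)]
        have hm : (j + 1) % (t.length + 1) = j + 1 := Nat.mod_eq_of_lt (by omega)
        simp only [List.length_cons] at *
        rw [get_congr (v::t) hm]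
        exact this

lemma isCycle_mono {P : V → V → Prop} {S₁ S₂ : Set V} (h : S₁ ⊆ S₂) {l : List V}
    (hc : IsCycle (Induced P S₁) l) : IsCycle (Induced P S₂) l := by
  rw [isCycle_iff_forall] at hc ⊢
  obtain ⟨h1, h2, h3⟩ := hc
  exact ⟨h1, h2, fun i => ⟨h (h3 i).1, h (h3 i).2.1, (h3 i).2.2⟩⟩

lemma acyclic_mono {P : V → V → Prop} {S₁ S₂ : Set V} (h : S₁ ⊆ S₂)
    (ha : Acyclic (Induced P S₂)) : Acyclic (Induced P S₁) :=
  fun l hc => ha l (isCycle_mono h hc)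

lemma isCycle_rotate {E : V → V → Prop} {l : List V} (h : IsCycle E l) (j : ℕ) :
    IsCycle E (l.rotate j) := by
  rw [isCycle_iff_forall] at h ⊢
  obtain ⟨hne, hnd, hF⟩ := h
  have hpos : 0 < l.length := List.length_pos_iff.2 hne
  have hlr : (l.rotate j).length = l.length := List.length_rotate l j
  refine ⟨by rwa [ne_eq, List.rotate_eq_nil_iff], List.nodup_rotate.2 hnd, fun i => ?_⟩
  obtain ⟨m, hm⟩ := i
  show E ((l.rotate j).get ⟨m, hm⟩)
    ((l.rotate j).get ⟨(m + 1) % (l.rotate j).length, Nat.mod_lt _ (Nat.zero_lt_of_lt hm)⟩)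
  have e1 : (l.rotate j).get ⟨m, hm⟩ = l.get ⟨(m + j) % l.length, Nat.mod_lt _ hpos⟩ :=
    List.get_rotate l j ⟨m, hm⟩
  have e2 : (l.rotate j).get ⟨(m + 1) % (l.rotate j).length, Nat.mod_lt _ (Nat.zero_lt_of_lt hm)⟩
      = l.get ⟨((m + j) % l.length + 1) % l.length, Nat.mod_lt _ hpos⟩ := by
    have e3 := List.get_rotate l j ⟨(m + 1) % (l.rotate j).length, Nat.mod_lt _ (Nat.zero_lt_of_lt hm)⟩
    rw [e3]
    refine get_congr l ?_ _ _
    show ((m + 1) % (l.rotate j).length + j) % l.length = ((m + j) % l.length + 1) % l.length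
    rw [hlr, Nat.mod_add_mod, Nat.mod_add_mod]
    congr 1
    omega
  rw [e1, e2]
  exact hF ⟨(m + j) % l.length, Nat.mod_lt _ hpos⟩

lemma cycleEdge_rotate {l : List V} {j : ℕ} {a b : V}
    (h : CycleEdge (l.rotate j) a b) : CycleEdge l a b := by
  obtain ⟨i, h1, h2⟩ := h
  obtain ⟨m, hm⟩ := i
  have hlr : (l.rotate j).length = l.length := List.length_rotate l j
  have hpos : 0 < l.length := by omega
  refine ⟨⟨(m + j) % l.length, Nat.mod_lt _ hpos⟩, ?_, ?_⟩
  · rw [List.get_rotate] at h1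
    exact h1
  · have h2' : l.get ⟨((m + 1) % (l.rotate j).length + j) % l.length, Nat.mod_lt _ hpos⟩ = b := by
      rw [List.get_rotate] at h2
      exact h2
    show l.get ⟨((m + j) % l.length + 1) % l.length, Nat.mod_lt _ hpos⟩ = b
    have key : ((m + j) % l.length + 1) % l.length
        = ((m + 1) % (l.rotate j).length + j) % l.length := by
      rw [hlr, Nat.mod_add_mod, Nat.mod_add_mod]
      congr 1
      omega
    rw [get_congr l key]
    exact h2'

theorem stmt2 (E : V → V → Prop) (e : V × V) (S : Set V)
    (h1 : ∃ l : List V, IsCycle (Induced E S) l)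
    (h2 : Acyclic (Induced (Delete E e) S))
    (hmin : ∀ S' : Set V, S' ⊂ S →
      ¬ ((∃ l : List V, IsCycle (Induced E S') l) ∧ Acyclic (Induced (Delete E e) S'))) :
    IsUnicycle E S ∧ Induced E S e.1 e.2 := by
  obtain ⟨l, hl⟩ := h1
  rw [isCycle_iff_forall] at hl
  obtain ⟨hne, hnd, hF⟩ := hl
  have hpos : 0 < l.length := List.length_pos_iff.2 hne
  have hsub : ∀ v ∈ l, v ∈ S := by
    intro v hv
    obtain ⟨i, rfl⟩ := List.get_of_mem hv
    exact (hF i).1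
  have hcycV : IsCycle (Induced E {v | v ∈ l}) l := by
    rw [isCycle_iff_forall]
    exact ⟨hne, hnd, fun i => ⟨List.get_mem _ _, List.get_mem _ _, (hF i).2.2⟩⟩
  have hSeq : ∀ v, v ∈ l ↔ v ∈ S := by
    intro v
    refine ⟨fun hv => hsub v hv, fun hv => ?_⟩
    by_contra hvl
    have hss : {v | v ∈ l} ⊂ S := by
      refine HasSubset.Subset.ssubset_of_ne (fun w hw => hsub w hw) ?_
      intro hEq
      rw [← hEq] at hv
      exact hvl hv
    exact hmin _ hss ⟨⟨l, hcycV⟩, acyclic_mono hss.subset h2⟩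
  have heEdge : CycleEdge l e.1 e.2 := by
    by_contra hce
    refine h2 l ?_
    rw [isCycle_iff_forall]
    refine ⟨hne, hnd, fun i => ?_⟩
    obtain ⟨ha, hb, hE⟩ := hF i
    refine ⟨ha, hb, hE, fun heq => hce ?_⟩
    exact ⟨i, by rw [← heq], by rw [← heq]⟩
  have heS : Induced E S e.1 e.2 := by
    obtain ⟨i, hi1, hi2⟩ := heEdge
    rw [← hi1, ← hi2]
    exact hF i
  have backward : ∀ a b, CycleEdge l a b → Induced E S a b := by
    rintro a b ⟨i, rfl, rfl⟩
    exact hF i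
  have forward : ∀ a b, Induced E S a b → CycleEdge l a b := by
    intro a b hab
    obtain ⟨j, hj⟩ := List.get_of_mem ((hSeq b).2 hab.2.1)
    have hcyc' : IsCycle (Induced E S) (l.rotate ↑j) := by
      apply isCycle_rotate
      rw [isCycle_iff_forall]
      exact ⟨hne, hnd, hF⟩
    rw [isCycle_iff_forall] at hcyc'
    obtain ⟨hne', hnd', hF'⟩ := hcyc'
    have hlen' : (l.rotate ↑j).length = l.length := List.length_rotate l ↑j
    have hF'' : ∀ (i : ℕ) (h : i < (l.rotate ↑j).length),
        Induced E S ((l.rotate ↑j).get ⟨i, h⟩)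
          ((l.rotate ↑j).get ⟨(i + 1) % (l.rotate ↑j).length,
            Nat.mod_lt _ (Nat.zero_lt_of_lt h)⟩) :=
      fun i h => hF' ⟨i, h⟩
    have hb0 : ∀ h0 : 0 < (l.rotate ↑j).length, (l.rotate ↑j).get ⟨0, h0⟩ = b := by
      intro h0
      rw [List.get_rotate]
      rw [get_congr l (show (0 + (↑j : ℕ)) % l.length = ↑j by
        rw [Nat.zero_add, Nat.mod_eq_of_lt j.isLt]) _ j.isLt]
      exact hj
    have haMem : a ∈ l.rotate ↑j := List.mem_rotate.2 ((hSeq a).2 hab.1)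
    obtain ⟨K, hKlt, hKa⟩ : ∃ K : ℕ, ∃ h : K < (l.rotate ↑j).length,
        (l.rotate ↑j).get ⟨K, h⟩ = a := by
      obtain ⟨k', hk'⟩ := List.get_of_mem haMem
      exact ⟨↑k', k'.isLt, hk'⟩
    set C : List V := (l.rotate ↑j).take (K + 1) with hC
    have hClen : C.length = K + 1 := by
      rw [hC, List.length_take]
      exact Nat.min_eq_left hKlt
    have hik : ∀ i : ℕ, i < C.length → i < (l.rotate ↑j).length := by
      intro i h
      rw [hClen] at h
      omega
    have hCget : ∀ (i : ℕ) (h : i < C.length),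
        C.get ⟨i, h⟩ = (l.rotate ↑j).get ⟨i, hik i h⟩ := by
      intro i h
      simp only [List.get_eq_getElem, hC]
      exact List.getElem_take
    have hCnd : C.Nodup := List.Nodup.sublist (List.take_sublist _ _) hnd'
    have hCsubl : ∀ v ∈ C, v ∈ l := fun v hv =>
      List.mem_rotate.1 ((List.take_sublist _ _).subset hv)
    have hCS : {v | v ∈ C} ⊆ S := fun v hv => hsub v (hCsubl v hv)
    have hCne : C ≠ [] := by
      refine List.length_pos_iff.1 ?_
      rw [hClen]
      omega
    have hCcyc : IsCycle (Induced E {v | v ∈ C}) C := by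
      rw [isCycle_iff_forall]
      refine ⟨hCne, hCnd, fun i => ?_⟩
      obtain ⟨m, hm⟩ := i
      show Induced E {v | v ∈ C} (C.get ⟨m, hm⟩)
        (C.get ⟨(m + 1) % C.length, Nat.mod_lt _ (Nat.zero_lt_of_lt hm)⟩)
      have hE : E (C.get ⟨m, hm⟩)
          (C.get ⟨(m + 1) % C.length, Nat.mod_lt _ (Nat.zero_lt_of_lt hm)⟩) := by
        rcases Nat.lt_or_ge (m + 1) C.length with hlt | hge
        · rw [get_congr C (Nat.mod_eq_of_lt hlt) _ hlt, hCget m hm, hCget (m+1) hlt]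
          have hthis := (hF'' m (hik m hm)).2.2
          rwa [get_congr (l.rotate ↑j) (Nat.mod_eq_of_lt (hik (m+1) hlt))] at hthis
        · have hieq : m + 1 = C.length := by omega
          have hmK : m = K := by omega
          rw [get_congr C (show (m + 1) % C.length = 0 by rw [hieq, Nat.mod_self]) _ (Nat.zero_lt_of_lt hm),
              hCget m hm, hCget 0 (Nat.zero_lt_of_lt hm), hb0,
              get_congr (l.rotate ↑j) hmK _ hKlt, hKa]
          exact hab.2.2
      exact ⟨List.get_mem _ _, List.get_mem _ _, hE⟩
    have hCeqS : {v | v ∈ C} = S := by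
      by_contra hneq
      exact hmin _ (hCS.ssubset_of_ne hneq) ⟨⟨C, hCcyc⟩, acyclic_mono hCS h2⟩
    have hsubC : l.rotate ↑j ⊆ C := by
      intro v hv
      have hvS : v ∈ S := hsub v (List.mem_rotate.1 hv)
      have : v ∈ {v | v ∈ C} := by rw [hCeqS]; exact hvS
      exact this
    have hlenle : (l.rotate ↑j).length ≤ C.length := (hnd'.subperm hsubC).length_le
    have hK1 : K + 1 = l.length := by omega
    apply cycleEdge_rotate (j := (↑j : ℕ))
    refine ⟨⟨K, hKlt⟩, hKa, ?_⟩
    have h0' : 0 < (l.rotate ↑j).length := Nat.zero_lt_of_lt hKlt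
    show (l.rotate ↑j).get
      ⟨(K + 1) % (l.rotate ↑j).length, Nat.mod_lt _ h0'⟩ = b
    rw [get_congr (l.rotate ↑j)
      (show (K + 1) % (l.rotate ↑j).length = 0 by rw [hlen', ← hK1, Nat.mod_self])
      (Nat.mod_lt _ h0') h0']
    exact hb0 h0'
  exact ⟨⟨l, hne, hnd, hSeq, fun a b => ⟨forward a b, backward a b⟩⟩, heS⟩
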